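/- For ρ ∈ (0,1), n ≥ 1, and γ ∈ (0,1), the correlated-model zero-default upper confidence bound is at least the independent-model bound: if p* is the unique solution of 1-γ = ∫ φ(y)(1 - Φ((Φ^{-1}(p) + √ρ y)/√(1-ρ)))^n dy, then p* ≥ 1 - (1-γ)^{1/n}. -/

import Mathlib

open MeasureTheory Real
open Set Filter ProbabilityTheory Topology

noncomputable def stdNormalPdf (y : ℝ) : ℝ := Real.exp (-y ^ 2 / 2) / Real.sqrt (2 * Real.pi)

noncomputable def stdNormalCdf (x : ℝ) : ℝ := ∫ y in Set.Iic x, stdNormalPdf y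

noncomputable def stdNormalInv : ℝ → ℝ := Function.invFun stdNormalCdf

lemma stdNormalPdf_eq : stdNormalPdf = gaussianPDFReal 0 1 := by
  funext y
  simp only [stdNormalPdf, gaussianPDFReal, NNReal.coe_one, mul_one, sub_zero]
  rw [div_eq_inv_mul]

lemma integrable_stdNormalPdf : Integrable stdNormalPdf := by
  rw [stdNormalPdf_eq]; exact integrable_gaussianPDFReal 0 1

lemma integral_stdNormalPdf : ∫ y, stdNormalPdf y = 1 := by
  rw [stdNormalPdf_eq]; exact integral_gaussianPDFReal_eq_one 0 one_ne_zero

lemma continuous_stdNormalPdf : Continuous stdNormalPdf := by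
  unfold stdNormalPdf
  exact (Real.continuous_exp.comp (by continuity)).div_const _

lemma stdNormalPdf_nonneg (y : ℝ) : 0 ≤ stdNormalPdf y := by
  unfold stdNormalPdf; positivity

lemma stdNormalPdf_affine {b : ℝ} (hb : 0 < b) (s w : ℝ) :
    stdNormalPdf ((w + s) / b) = b * gaussianPDFReal (-s) (⟨b ^ 2, sq_nonneg b⟩ : NNReal) w := by
  have hπ : (0:ℝ) < 2 * π := by positivity
  simp only [stdNormalPdf, gaussianPDFReal, NNReal.coe_mk, sub_neg_eq_add]
  change Real.exp (-((w + s) / b) ^ 2 / 2) / Real.sqrt (2 * π)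
    = b * ((Real.sqrt (2 * π * b ^ 2))⁻¹ * Real.exp (-(w + s) ^ 2 / (2 * b ^ 2)))
  rw [show (2:ℝ) * π * b ^ 2 = (2 * π) * b ^ 2 by ring, Real.sqrt_mul hπ.le,
    Real.sqrt_sq hb.le]
  have h2 : ((w + s) / b) ^ 2 / 2 = (w + s) ^ 2 / (2 * b ^ 2) := by
    rw [div_pow]; ring
  rw [neg_div, neg_div, ← h2]
  field_simp

lemma stdNormalPdf_affine_ne (b : ℝ) (hb : 0 < b) :
    (⟨b ^ 2, sq_nonneg b⟩ : NNReal) ≠ 0 := by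
  intro h
  have := congrArg NNReal.toReal h
  change b ^ 2 = 0 at this
  exact (pow_pos hb 2).ne' this

lemma integrable_stdNormalPdf_affine {b : ℝ} (hb : 0 < b) (s : ℝ) :
    Integrable (fun w => stdNormalPdf ((w + s) / b)) := by
  simp_rw [stdNormalPdf_affine hb s]
  exact (integrable_gaussianPDFReal _ _).const_mul b

lemma integral_stdNormalPdf_affine {b : ℝ} (hb : 0 < b) (s : ℝ) :
    ∫ w, stdNormalPdf ((w + s) / b) = b := by
  simp_rw [stdNormalPdf_affine hb s]
  rw [integral_const_mul, integral_gaussianPDFReal_eq_one _ (stdNormalPdf_affine_ne b hb),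
    mul_one]

lemma stdNormalCdf_nonneg (x : ℝ) : 0 ≤ stdNormalCdf x :=
  setIntegral_nonneg measurableSet_Iic fun y _ => stdNormalPdf_nonneg y

lemma stdNormalCdf_le_one (x : ℝ) : stdNormalCdf x ≤ 1 := by
  rw [← integral_stdNormalPdf]
  exact setIntegral_le_integral integrable_stdNormalPdf
    (Eventually.of_forall stdNormalPdf_nonneg)

lemma stdNormalCdf_eq_indicator (x : ℝ) :
    stdNormalCdf x = ∫ y, (Set.Iic x).indicator stdNormalPdf y :=
  (integral_indicator measurableSet_Iic).symm

lemma tendsto_stdNormalCdf_atTop : Tendsto stdNormalCdf atTop (𝓝 1) := by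
  rw [← integral_stdNormalPdf]
  have := tendsto_integral_filter_of_dominated_convergence (μ := volume) (l := atTop)
    (F := fun t (y : ℝ) => (Set.Iic t).indicator stdNormalPdf y) (f := stdNormalPdf)
    stdNormalPdf
    (Eventually.of_forall fun t =>
      (continuous_stdNormalPdf.aestronglyMeasurable).indicator measurableSet_Iic)
    (Eventually.of_forall fun t => Eventually.of_forall fun y => by
      simp only [Real.norm_eq_abs, Set.indicator_apply]
      split_ifs
      · rw [abs_of_nonneg (stdNormalPdf_nonneg y)]
      · rw [abs_zero]; exact stdNormalPdf_nonneg y)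
    integrable_stdNormalPdf
    (Eventually.of_forall fun y => by
      refine tendsto_const_nhds.congr' ?_
      filter_upwards [eventually_ge_atTop y] with t ht
      exact (Set.indicator_of_mem (Set.mem_Iic.2 ht) _).symm)
  exact this.congr fun t => (stdNormalCdf_eq_indicator t).symm

lemma tendsto_stdNormalCdf_atBot : Tendsto stdNormalCdf atBot (𝓝 0) := by
  have h0 : (0:ℝ) = ∫ (_ : ℝ), (0:ℝ) := by simp
  rw [h0]
  have := tendsto_integral_filter_of_dominated_convergence (μ := volume) (l := atBot)
    (F := fun t (y : ℝ) => (Set.Iic t).indicator stdNormalPdf y) (f := fun _ => (0:ℝ))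
    stdNormalPdf
    (Eventually.of_forall fun t =>
      (continuous_stdNormalPdf.aestronglyMeasurable).indicator measurableSet_Iic)
    (Eventually.of_forall fun t => Eventually.of_forall fun y => by
      simp only [Real.norm_eq_abs, Set.indicator_apply]
      split_ifs
      · rw [abs_of_nonneg (stdNormalPdf_nonneg y)]
      · rw [abs_zero]; exact stdNormalPdf_nonneg y)
    integrable_stdNormalPdf
    (Eventually.of_forall fun y => by
      refine tendsto_const_nhds.congr' ?_
      filter_upwards [eventually_lt_atBot y] with t ht
      exact (Set.indicator_of_notMem (fun h => absurd (Set.mem_Iic.1 h) (not_le.2 ht)) _).symm)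
  exact this.congr fun t => (stdNormalCdf_eq_indicator t).symm

lemma continuous_stdNormalCdf : Continuous stdNormalCdf := by
  have h0 : stdNormalCdf = fun x => stdNormalCdf 0 + ∫ t in (0:ℝ)..x, stdNormalPdf t := by
    funext x
    have := intervalIntegral.integral_Iic_sub_Iic (integrable_stdNormalPdf.integrableOn)
      (integrable_stdNormalPdf.integrableOn) (a := 0) (b := x)
    unfold stdNormalCdf
    linarith
  rw [h0]
  exact continuous_const.add (intervalIntegral.continuous_primitive
    (fun a b => integrable_stdNormalPdf.intervalIntegrable) 0)

lemma stdNormalCdf_invFun {p : ℝ} (hp : p ∈ Set.Ioo (0:ℝ) 1) :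
    stdNormalCdf (stdNormalInv p) = p := by
  have h1 : ∀ᶠ t in atBot, stdNormalCdf t < p :=
    tendsto_stdNormalCdf_atBot.eventually_lt_const hp.1
  have h2 : ∀ᶠ t in atTop, p < stdNormalCdf t :=
    tendsto_stdNormalCdf_atTop.eventually_const_lt hp.2
  obtain ⟨x, hx⟩ := h1.exists
  obtain ⟨y, hy⟩ := h2.exists
  have : p ∈ Set.range stdNormalCdf :=
    intermediate_value_univ x y continuous_stdNormalCdf ⟨hx.le, hy.le⟩
  exact Function.invFun_eq this
lemma stdNormalCdf_affine {b : ℝ} (hb : 0 < b) (s c : ℝ) :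
    stdNormalCdf ((c + s) / b) = ∫ w in Set.Iic c, stdNormalPdf ((w + s) / b) / b := by
  have hinj : Set.InjOn (fun w => (w + s) / b) (Set.Iic c) := by
    intro u _ v _ h
    field_simp at h
    linarith
  have himg : (fun w => (w + s) / b) '' (Set.Iic c) = Set.Iic ((c + s) / b) := by
    ext z
    simp only [Set.mem_image, Set.mem_Iic]
    constructor
    · rintro ⟨w, hw, rfl⟩
      gcongr
    · intro hz
      refine ⟨b * z - s, ?_, by field_simp; ring⟩
      have : b * z ≤ c + s := by
        rw [mul_comm]
        exact (le_div_iff₀ hb).1 hz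
      linarith
  have hderiv : ∀ x ∈ Set.Iic c, HasDerivWithinAt (fun w => (w + s) / b) (1 / b) (Set.Iic c) x := by
    intro x _
    simpa using (((hasDerivAt_id x).add_const s).div_const b).hasDerivWithinAt
  have := integral_image_eq_integral_abs_deriv_smul measurableSet_Iic hderiv hinj stdNormalPdf
  rw [himg] at this
  unfold stdNormalCdf
  rw [this]
  refine setIntegral_congr_fun measurableSet_Iic fun w _ => ?_
  rw [abs_of_pos (by positivity : (0:ℝ) < 1 / b), smul_eq_mul]
  ring

lemma stdNormalPdf_swap {a b : ℝ} (hb : b ≠ 0) (hab : a ^ 2 + b ^ 2 = 1) (y w : ℝ) :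
    stdNormalPdf y * stdNormalPdf ((w + a * y) / b)
      = stdNormalPdf w * stdNormalPdf ((y + a * w) / b) := by
  simp only [stdNormalPdf, div_mul_div_comm, ← Real.exp_add]
  congr 2
  field_simp
  nlinarith [sq_nonneg y, sq_nonneg w, hab]
lemma key_identity {a b : ℝ} (ha : 0 < a) (hb : 0 < b) (hab : a ^ 2 + b ^ 2 = 1) (c : ℝ) :
    ∫ y, stdNormalPdf y * stdNormalCdf ((c + a * y) / b) = stdNormalCdf c := by
  set H : ℝ → ℝ → ℝ := fun y w => stdNormalPdf y * (stdNormalPdf ((w + a * y) / b) / b) with hHdef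
  have hH : ∀ y, stdNormalPdf y * stdNormalCdf ((c + a * y) / b)
      = ∫ w in Set.Iic c, H y w := by
    intro y
    rw [stdNormalCdf_affine hb (a * y) c, ← integral_const_mul]
  have hHnn : ∀ y w, 0 ≤ H y w := fun y w =>
    mul_nonneg (stdNormalPdf_nonneg y) (div_nonneg (stdNormalPdf_nonneg _) hb.le)
  have hcont : Continuous (fun p : ℝ × ℝ => H p.1 p.2) := by
    apply (continuous_stdNormalPdf.comp continuous_fst).mul
    apply Continuous.div_const
    exact continuous_stdNormalPdf.comp (by fun_prop)
  have hmeas : AEStronglyMeasurable (Function.uncurry H)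
      ((volume : Measure ℝ).prod (volume.restrict (Set.Iic c))) :=
    hcont.aestronglyMeasurable
  have hinner_eq : ∀ y, (∫ w in Set.Iic c, H y w)
      = stdNormalPdf y * ∫ w in Set.Iic c, stdNormalPdf ((w + a * y) / b) / b :=
    fun y => integral_const_mul _ _
  have hint_q : ∀ s : ℝ, Integrable (fun w => stdNormalPdf ((w + s) / b) / b) :=
    fun s => (integrable_stdNormalPdf_affine hb s).div_const b
  have hq_one : ∀ s : ℝ, (∫ w, stdNormalPdf ((w + s) / b) / b) = 1 := by
    intro s
    rw [integral_div, integral_stdNormalPdf_affine hb s, div_self hb.ne']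
  have hbound : ∀ y, (∫ w in Set.Iic c, H y w) ≤ stdNormalPdf y := by
    intro y
    rw [hinner_eq y]
    calc stdNormalPdf y * ∫ w in Set.Iic c, stdNormalPdf ((w + a * y) / b) / b
        ≤ stdNormalPdf y * 1 := by
          refine mul_le_mul_of_nonneg_left ?_ (stdNormalPdf_nonneg y)
          rw [← hq_one (a * y)]
          exact setIntegral_le_integral (hint_q (a * y))
            (Eventually.of_forall fun w =>
              div_nonneg (stdNormalPdf_nonneg _) hb.le)
      _ = stdNormalPdf y := mul_one _
  have hint : Integrable (Function.uncurry H)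
      ((volume : Measure ℝ).prod (volume.restrict (Set.Iic c))) := by
    refine (integrable_prod_iff hmeas).2 ⟨?_, ?_⟩
    · exact Eventually.of_forall fun y =>
        (((hint_q (a * y)).const_mul (stdNormalPdf y)).restrict)
    · refine integrable_stdNormalPdf.mono' hmeas.norm.integral_prod_right' ?_
      refine Eventually.of_forall fun y => ?_
      have h1 : ∀ w, ‖H y w‖ = H y w := fun w => norm_of_nonneg (hHnn y w)
      simp only [Function.uncurry_apply_pair]
      rw [norm_of_nonneg (integral_nonneg fun w => norm_nonneg _)]
      calc (∫ w in Set.Iic c, ‖H y w‖) = ∫ w in Set.Iic c, H y w := by simp_rw [h1]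
        _ ≤ stdNormalPdf y := hbound y
  have hswap : (∫ y, ∫ w in Set.Iic c, H y w) = ∫ w in Set.Iic c, ∫ y, H y w :=
    integral_integral_swap hint
  have hinner2 : ∀ w, (∫ y, H y w) = stdNormalPdf w := by
    intro w
    have hsw : ∀ y, H y w = stdNormalPdf w * (stdNormalPdf ((y + a * w) / b) / b) := by
      intro y
      rw [hHdef]
      simp only
      rw [mul_div_assoc', mul_div_assoc', stdNormalPdf_swap hb.ne' hab y w]
    simp_rw [hsw]
    rw [integral_const_mul, hq_one (a * w), mul_one]
  calc ∫ y, stdNormalPdf y * stdNormalCdf ((c + a * y) / b)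
      = ∫ y, ∫ w in Set.Iic c, H y w := by simp_rw [hH]
    _ = ∫ w in Set.Iic c, ∫ y, H y w := hswap
    _ = ∫ w in Set.Iic c, stdNormalPdf w := by simp_rw [hinner2]
    _ = stdNormalCdf c := rfl
lemma integral_gaussianReal_std (h : ℝ → ℝ) :
    ∫ x, h x ∂(gaussianReal 0 1) = ∫ x, stdNormalPdf x * h x := by
  rw [gaussianReal_of_var_ne_zero 0 one_ne_zero]
  have hpdf : gaussianPDF 0 1 = fun x => ((Real.toNNReal (gaussianPDFReal 0 1 x) : NNReal) : ENNReal) :=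
    funext fun x => rfl
  rw [hpdf, integral_withDensity_eq_integral_smul
    ((measurable_gaussianPDFReal 0 1).real_toNNReal)]
  refine integral_congr_ae (Eventually.of_forall fun x => ?_)
  simp only [NNReal.smul_def, smul_eq_mul]
  rw [Real.coe_toNNReal _ (gaussianPDFReal_nonneg 0 1 x), stdNormalPdf_eq]
theorem correlated_bound_ge_independent_bound (ρ : ℝ) (hρ : ρ ∈ Set.Ioo (0:ℝ) 1)
    (n : ℕ) (hn : 1 ≤ n) (γ : ℝ) (hγ : γ ∈ Set.Ioo (0:ℝ) 1)
    (pstar : ℝ) (hpstar : pstar ∈ Set.Ioo (0:ℝ) 1)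
    (hsol : 1 - γ = ∫ y : ℝ, stdNormalPdf y *
      (1 - stdNormalCdf ((stdNormalInv pstar + Real.sqrt ρ * y) / Real.sqrt (1 - ρ))) ^ n) :
    pstar ≥ 1 - (1 - γ) ^ ((1:ℝ)/n) := by
  obtain ⟨hρ0, hρ1⟩ := hρ
  obtain ⟨hγ0, hγ1⟩ := hγ
  obtain ⟨hp0, hp1⟩ := hpstar
  set a := Real.sqrt ρ with hadef
  set b := Real.sqrt (1 - ρ) with hbdef
  have ha : 0 < a := Real.sqrt_pos.2 hρ0
  have hb : 0 < b := Real.sqrt_pos.2 (by linarith)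
  have hab : a ^ 2 + b ^ 2 = 1 := by
    rw [hadef, hbdef, Real.sq_sqrt hρ0.le, Real.sq_sqrt (by linarith : (0:ℝ) ≤ 1 - ρ)]
    ring
  set c := stdNormalInv pstar with hcdef
  have hcp : stdNormalCdf c = pstar := stdNormalCdf_invFun ⟨hp0, hp1⟩
  set g : ℝ → ℝ := fun y => 1 - stdNormalCdf ((c + a * y) / b) with hgdef
  have hg0 : ∀ y, 0 ≤ g y := fun y => by
    simp only [hgdef, sub_nonneg]
    exact stdNormalCdf_le_one _
  have hg1 : ∀ y, g y ≤ 1 := fun y => by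
    simp only [hgdef]
    have := stdNormalCdf_nonneg ((c + a * y) / b)
    linarith
  have hgcont : Continuous g := by
    apply continuous_const.sub
    exact continuous_stdNormalCdf.comp (by fun_prop)
  have hmean_vol : ∫ y, stdNormalPdf y * g y = 1 - pstar := by
    have hint2 : Integrable (fun y => stdNormalPdf y * stdNormalCdf ((c + a * y) / b)) := by
      refine integrable_stdNormalPdf.mono'
        ((continuous_stdNormalPdf.mul
          (continuous_stdNormalCdf.comp (by fun_prop))).aestronglyMeasurable) ?_
      refine Eventually.of_forall fun y => ?_
      rw [Real.norm_eq_abs, abs_mul, abs_of_nonneg (stdNormalPdf_nonneg y),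
        abs_of_nonneg (stdNormalCdf_nonneg _)]
      exact mul_le_of_le_one_right (stdNormalPdf_nonneg y) (stdNormalCdf_le_one _)
    have heq : (fun y => stdNormalPdf y * g y)
        = fun y => stdNormalPdf y - stdNormalPdf y * stdNormalCdf ((c + a * y) / b) := by
      funext y
      simp only [hgdef]
      ring
    rw [heq, integral_sub integrable_stdNormalPdf hint2, integral_stdNormalPdf,
      key_identity ha hb hab c, hcp]
  have hgi : Integrable g (gaussianReal 0 1) := by
    refine (integrable_const (1:ℝ)).mono' hgcont.aestronglyMeasurable ?_
    refine Eventually.of_forall fun y => ?_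
    rw [Real.norm_eq_abs, abs_of_nonneg (hg0 y)]
    simpa using hg1 y
  have hgni : Integrable (fun y => g y ^ n) (gaussianReal 0 1) := by
    refine (integrable_const (1:ℝ)).mono' (hgcont.pow n).aestronglyMeasurable ?_
    refine Eventually.of_forall fun y => ?_
    rw [Real.norm_eq_abs, abs_of_nonneg (pow_nonneg (hg0 y) n)]
    simpa using pow_le_one₀ (hg0 y) (hg1 y)
  have hjensen : (∫ y, g y ∂(gaussianReal 0 1)) ^ n
      ≤ ∫ y, g y ^ n ∂(gaussianReal 0 1) :=
    (convexOn_pow n).map_integral_le (continuous_pow n).continuousOn isClosed_Ici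
      (Eventually.of_forall fun y => hg0 y) hgi hgni
  have hmean : ∫ y, g y ∂(gaussianReal 0 1) = 1 - pstar := by
    rw [integral_gaussianReal_std]
    exact hmean_vol
  have hsol' : 1 - γ = ∫ y, g y ^ n ∂(gaussianReal 0 1) := by
    rw [integral_gaussianReal_std]
    exact hsol
  have hpow : (1 - pstar) ^ n ≤ 1 - γ := by
    rw [hsol', ← hmean]
    exact hjensen
  have h1p : (0:ℝ) ≤ 1 - pstar := by linarith
  have hn' : (n:ℝ) ≠ 0 := Nat.cast_ne_zero.2 (by omega)
  have hmono := Real.rpow_le_rpow (pow_nonneg h1p n) hpow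
    (by positivity : (0:ℝ) ≤ 1 / n)
  rw [← Real.rpow_natCast (1 - pstar) n, ← Real.rpow_mul h1p, mul_one_div,
    div_self hn', Real.rpow_one] at hmono
  linarith
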